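/- arXiv:1304.0063 — 2 statements merged into one kernel-verified Lean document; each statement's English description precedes it below -/
import Mathlib

section
/- D is a finite factorization domain (FFD) if and only if both of the following hold: (i) every nonzero nonunit b ∈ D that cannot be written as b = ξc with ξ ∈ D irreducible and c ∈ D a nonzero nonunit is itself irreducible; and (ii) for every nonzero nonunit a ∈ D, the set of chains from a, where two chains a = a₀, a₁, …, aₙ and a = a₀', a₁', …, aₘ' are identified when n = m and aᵢD = aᵢ'D for all i, is finite. -/
def IsChainFrom (D : Type*) [CommRing D] (a : D) (n : ℕ) (f : ℕ → D) : Prop :=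
  f 0 = a ∧ (∀ i ≤ n, f i ≠ 0 ∧ ¬ IsUnit (f i)) ∧
    ∀ i, 1 ≤ i → i ≤ n → ∃ π : D, Irreducible π ∧ f (i - 1) = π * f i

section Helpers
variable {D : Type*} [CommRing D] [IsDomain D]

lemma mk_list_prod' (l : List D) :
    Associates.mk l.prod = (l.map Associates.mk).prod :=
  (List.prod_hom l (Associates.mkMonoidHom)).symm

lemma prod_irred_ne_zero {l : List D} (h : ∀ p ∈ l, Irreducible p) : l.prod ≠ 0 := by
  induction l with
  | nil => simp
  | cons p t ih =>
    simp only [List.prod_cons]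
    exact mul_ne_zero (h p (by simp)).ne_zero (ih fun q hq => h q (by simp [hq]))

omit [IsDomain D] in
lemma prod_irred_not_unit {l : List D} (h : ∀ p ∈ l, Irreducible p) (hne : l ≠ []) :
    ¬ IsUnit l.prod := by
  cases l with
  | nil => exact absurd rfl hne
  | cons p t =>
    simp only [List.prod_cons]
    intro hu
    exact (h p (by simp)).not_isUnit (isUnit_of_mul_isUnit_left hu)

omit [IsDomain D] in
lemma chain_mono {a : D} {n m : ℕ} {f : ℕ → D} (hmn : m ≤ n)
    (h : IsChainFrom D a n f) : IsChainFrom D a m f :=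
  ⟨h.1, fun i hi => h.2.1 i (hi.trans hmn), fun i h1 h2 => h.2.2 i h1 (h2.trans hmn)⟩

omit [IsDomain D] in
lemma chain_prod {a : D} {n : ℕ} {f : ℕ → D} (h : IsChainFrom D a n f) :
    ∃ l : List D, l.length = n ∧ (∀ p ∈ l, Irreducible p) ∧ a = l.prod * f n := by
  induction n with
  | zero => exact ⟨[], rfl, by simp, by simp [h.1.symm]⟩
  | succ n ih =>
    obtain ⟨l, hlen, hirr, hprod⟩ := ih (chain_mono (Nat.le_succ n) h)
    obtain ⟨π, hπ, hstep⟩ := h.2.2 (n + 1) (Nat.le_add_left 1 n) le_rfl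
    refine ⟨l ++ [π], by simp [hlen], ?_, ?_⟩
    · intro p hp
      rcases List.mem_append.mp hp with hp | hp
      · exact hirr p hp
      · simp only [List.mem_singleton] at hp; exact hp ▸ hπ
    · simp only [Nat.add_sub_cancel] at hstep
      rw [hprod, hstep, List.prod_append, List.prod_singleton]
      ring
end Helpers

/-- `D` is a finite factorization domain (atomic and each nonzero nonunit has only
finitely many factorizations into irreducibles up to order and associates, encoded as
multisets of associate classes of irreducibles with the given product) iff
(i) every nonzero nonunit `b` which cannot be written `b = ξ * c` with `ξ` irreducible
and `c` a nonzero nonunit is itself irreducible, and (ii) for every nonzero nonunit `a`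
the set of chains from `a`, identified when they have the same length and corresponding
terms generate the same principal ideals (i.e. are associated), is finite. -/
theorem ffd_iff_finitely_many_paths (D : Type*) [CommRing D] [IsDomain D] :
    ((∀ a : D, a ≠ 0 → ¬ IsUnit a →
        ∃ l : List D, l ≠ [] ∧ (∀ p ∈ l, Irreducible p) ∧ a = l.prod) ∧
      (∀ a : D, a ≠ 0 → ¬ IsUnit a →
        {s : Multiset (Associates D) |
          s.prod = Associates.mk a ∧ ∀ p ∈ s, Irreducible p}.Finite)) ↔
      ((∀ b : D, b ≠ 0 → ¬ IsUnit b →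
          (¬ ∃ ξ c : D, Irreducible ξ ∧ c ≠ 0 ∧ ¬ IsUnit c ∧ b = ξ * c) →
          Irreducible b) ∧
        (∀ a : D, a ≠ 0 → ¬ IsUnit a →
          {c : Σ n : ℕ, Fin (n + 1) → Associates D |
            ∃ f : ℕ → D, IsChainFrom D a c.1 f ∧
              c.2 = fun i : Fin (c.1 + 1) => Associates.mk (f i)}.Finite)) := by
  constructor
  · rintro ⟨hatomic, hfin⟩
    constructor
    · intro b hb0 hbu hno
      obtain ⟨l, hlne, hlirr, hprod⟩ := hatomic b hb0 hbu
      match l, hlne with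
      | [p], _ =>
        have : b = p := by simpa using hprod
        exact this ▸ hlirr p (by simp)
      | (p :: q :: r), _ =>
        exact absurd ⟨p, (q :: r).prod, hlirr p (by simp),
          prod_irred_ne_zero (fun x hx => hlirr x (by simp [hx])),
          prod_irred_not_unit (fun x hx => hlirr x (by simp [hx])) (by simp),
          by simpa using hprod⟩ hno
    · intro a ha0 hau
      have hT := hfin a ha0 hau
      set T : Set (Multiset (Associates D)) :=
        {s | s.prod = Associates.mk a ∧ ∀ p ∈ s, Irreducible p} with hTdef
      set N : ℕ := hT.toFinset.sup Multiset.card with hNdef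
      set Dv : Set (Associates D) := {d | ∃ s ∈ T, ∃ u ≤ s, d = u.prod} with hDvdef
      have hDv : Dv.Finite := by
        have heq : Dv = ⋃ s ∈ T, Multiset.prod '' {u | u ≤ s} := by
          ext d
          simp [hDvdef, Set.mem_iUnion, eq_comm]
        rw [heq]
        refine hT.biUnion fun s _ => Set.Finite.image _ ?_
        have hps : {u : Multiset (Associates D) | u ≤ s} = {u | u ∈ s.powerset} := by
          ext u; simp [Multiset.mem_powerset]
        rw [hps]; exact s.powerset.finite_toSet
      have key : ∀ (n : ℕ) (f : ℕ → D), IsChainFrom D a n f → ∀ i ≤ n,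
          ∃ s ∈ T, i + 1 ≤ Multiset.card s ∧ ∃ u ≤ s, Associates.mk (f i) = u.prod := by
        intro n f hchain i hi
        obtain ⟨l, hlen, hlirr, hprodl⟩ := chain_prod (chain_mono hi hchain)
        obtain ⟨hfi0, hfiu⟩ := hchain.2.1 i hi
        obtain ⟨m, hmne, hmirr, hmprod⟩ := hatomic (f i) hfi0 hfiu
        refine ⟨(((l ++ m).map Associates.mk : List (Associates D)) : Multiset (Associates D)),
          ⟨?_, ?_⟩, ?_, ((m.map Associates.mk : List (Associates D)) : Multiset _), ?_, ?_⟩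
        · rw [Multiset.prod_coe, ← mk_list_prod', List.prod_append]
          rw [hprodl, hmprod]
        · intro p hp
          simp only [Multiset.mem_coe, List.mem_map] at hp
          obtain ⟨x, hx, rfl⟩ := hp
          rw [Associates.irreducible_mk]
          rcases List.mem_append.mp hx with hx | hx
          · exact hlirr x hx
          · exact hmirr x hx
        · rw [Multiset.coe_card, List.length_map, List.length_append, hlen]
          have : m.length ≥ 1 := List.length_pos_iff.mpr hmne
          omega
        · rw [List.map_append]
          rw [← Multiset.coe_add]
          exact Multiset.le_add_left _ _
        · rw [Multiset.prod_coe, ← mk_list_prod', hmprod]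
      refine Set.Finite.subset (Set.Finite.biUnion (Set.finite_Iio N) (fun n _ =>
        Set.Finite.image (fun g : Fin (n+1) → Associates D =>
          (⟨n, g⟩ : Σ n, Fin (n+1) → Associates D))
          (Set.Finite.pi fun _ => hDv))) ?_
      rintro ⟨n, g⟩ ⟨f, hchain, hg⟩
      simp only [Set.mem_iUnion, Set.mem_image, Set.mem_pi, Set.mem_univ, forall_true_left,
        Set.mem_Iio]
      refine ⟨n, ?_, g, ?_, rfl⟩
      · obtain ⟨s, hs, hcard, -⟩ := key n f hchain n le_rfl
        have hmem : s ∈ hT.toFinset := hT.mem_toFinset.mpr hs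
        have := Finset.le_sup (f := Multiset.card) hmem
        omega
      · intro i
        obtain ⟨s, hs, -, u, hu, hval⟩ := key n f hchain i (Nat.lt_succ_iff.mp i.isLt)
        have hgi : g i = Associates.mk (f i) := congrFun hg i
        rw [hgi]
        exact ⟨s, hs, u, hu, hval⟩
  · rintro ⟨hirr, hchains⟩
    have hat : ∀ a : D, a ≠ 0 → ¬ IsUnit a →
        ∃ l : List D, l ≠ [] ∧ (∀ p ∈ l, Irreducible p) ∧ a = l.prod := by
      intro a ha0 hau
      have hS := hchains a ha0 hau
      have htriv : (⟨0, fun _ => Associates.mk a⟩ : Σ n : ℕ, Fin (n+1) → Associates D) ∈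
          {c : Σ n : ℕ, Fin (n + 1) → Associates D |
            ∃ f : ℕ → D, IsChainFrom D a c.1 f ∧
              c.2 = fun i : Fin (c.1 + 1) => Associates.mk (f i)} :=
        ⟨fun _ => a, ⟨rfl, fun i _ => ⟨ha0, hau⟩, fun i h1 h2 => absurd (h1.trans h2) (by simp)⟩,
          rfl⟩
      have hne : (hS.toFinset.image Sigma.fst).Nonempty :=
        ⟨0, Finset.mem_image.mpr ⟨_, hS.mem_toFinset.mpr htriv, rfl⟩⟩
      set N := (hS.toFinset.image Sigma.fst).max' hne with hNdef
      obtain ⟨c, hcS, hcN⟩ := Finset.mem_image.mp ((hS.toFinset.image Sigma.fst).max'_mem hne)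
      obtain ⟨f, hchain, hgc⟩ := hS.mem_toFinset.mp hcS
      rw [hcN] at hchain
      obtain ⟨hfN0, hfNu⟩ := hchain.2.1 N le_rfl
      have hirrN : Irreducible (f N) := by
        by_contra hnot
        have hex : ∃ ξ c' : D, Irreducible ξ ∧ c' ≠ 0 ∧ ¬ IsUnit c' ∧ f N = ξ * c' := by
          by_contra hnex
          exact hnot (hirr (f N) hfN0 hfNu hnex)
        obtain ⟨ξ, c', hξ, hc0, hcu, heq⟩ := hex
        set f' : ℕ → D := fun i => if i = N + 1 then c' else f i with hf'
        have hchain' : IsChainFrom D a (N+1) f' := by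
          refine ⟨?_, ?_, ?_⟩
          · have : f' 0 = f 0 := by simp [hf']
            rw [this]; exact hchain.1
          · intro i hi
            by_cases h : i = N + 1
            · simp [hf', h, hc0, hcu]
            · have hiN : i ≤ N := by omega
              simpa [hf', h] using hchain.2.1 i hiN
          · intro i h1 h2
            by_cases h : i = N + 1
            · refine ⟨ξ, hξ, ?_⟩
              subst h
              simp only [Nat.add_sub_cancel, hf']
              simp [heq]
            · have hiN : i ≤ N := by omega
              obtain ⟨π, hπ, hstep⟩ := hchain.2.2 i h1 hiN
              refine ⟨π, hπ, ?_⟩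
              have h1' : i - 1 ≠ N + 1 := by omega
              simp [hf', h, h1', hstep]
        have hmem : (⟨N+1, fun i : Fin (N+2) => Associates.mk (f' i)⟩ :
            Σ n : ℕ, Fin (n+1) → Associates D) ∈
            {c : Σ n : ℕ, Fin (n + 1) → Associates D |
              ∃ f : ℕ → D, IsChainFrom D a c.1 f ∧
                c.2 = fun i : Fin (c.1 + 1) => Associates.mk (f i)} :=
          ⟨f', hchain', rfl⟩
        have hle : N + 1 ≤ N := by
          refine (hS.toFinset.image Sigma.fst).le_max' _ ?_
          exact Finset.mem_image.mpr ⟨_, hS.mem_toFinset.mpr hmem, rfl⟩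
        omega
      obtain ⟨l, hlen, hlirr, hprodl⟩ := chain_prod hchain
      refine ⟨l ++ [f N], by simp, ?_, ?_⟩
      · intro p hp
        rcases List.mem_append.mp hp with hp | hp
        · exact hlirr p hp
        · simp only [List.mem_singleton] at hp; exact hp ▸ hirrN
      · rw [List.prod_append, List.prod_singleton, hprodl]
    refine ⟨hat, ?_⟩
    intro a ha0 hau
    classical
    have hS := hchains a ha0 hau
    set rep : Associates D → D := fun q => Classical.choose (Associates.mk_surjective q) with hrep
    have hrepmk : ∀ q : Associates D, Associates.mk (rep q) = q := fun q =>
      Classical.choose_spec (Associates.mk_surjective q)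
    set L : Multiset (Associates D) → List D := fun s => s.toList.map rep with hL
    have hLmap : ∀ s : Multiset (Associates D), (L s).map Associates.mk = s.toList := by
      intro s
      simp only [hL, List.map_map]
      simp [Function.comp_def, hrepmk]
    have hLlen : ∀ s : Multiset (Associates D), (L s).length = Multiset.card s := by
      intro s
      have := congrArg List.length (hLmap s)
      rwa [List.length_map, Multiset.length_toList] at this
    have hLirr : ∀ s : Multiset (Associates D), (∀ p ∈ s, Irreducible p) →
        ∀ x ∈ L s, Irreducible x := by
      intro s hs x hx
      simp only [hL, List.mem_map] at hx
      obtain ⟨q, hq, rfl⟩ := hx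
      have hqs : q ∈ s := by rwa [← Multiset.mem_toList]
      have hirrq := hs q hqs
      rw [← hrepmk q] at hirrq
      exact Associates.irreducible_mk.mp hirrq
    have hLprod : ∀ s : Multiset (Associates D), Associates.mk (L s).prod = s.prod := by
      intro s
      rw [mk_list_prod', hLmap, Multiset.prod_toList]
    have hcard1 : ∀ s : Multiset (Associates D), s.prod = Associates.mk a →
        1 ≤ Multiset.card s := by
      intro s hsprod
      rcases Nat.eq_zero_or_pos (Multiset.card s) with h0 | h
      · exfalso
        have hs0 : s = 0 := Multiset.card_eq_zero.mp h0
        rw [hs0] at hsprod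
        refine hau (Associates.isUnit_mk.mp ?_)
        rw [← hsprod]
        simp
      · exact h
    refine Set.Finite.of_finite_image
      (f := fun s : Multiset (Associates D) =>
        (⟨Multiset.card s - 1, fun i : Fin (Multiset.card s - 1 + 1) =>
          Associates.mk (((L s).drop (i : ℕ)).prod)⟩ : Σ n : ℕ, Fin (n+1) → Associates D))
      (hS.subset ?_) ?_
    · -- image is contained in the chain set
      rintro c ⟨s, ⟨hsprod, hsirr⟩, rfl⟩
      simp only [Set.mem_setOf_eq]
      have hk1 : 1 ≤ Multiset.card s := hcard1 s hsprod
      have hlirr : ∀ x ∈ L s, Irreducible x := hLirr s hsirr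
      have hmka : Associates.mk (L s).prod = Associates.mk a := by rw [hLprod, hsprod]
      have hlen : (L s).length = Multiset.card s := hLlen s
      set n : ℕ := Multiset.card s - 1 with hn
      refine ⟨fun i => if i = 0 then a else ((L s).drop i).prod, ⟨by simp, ?_, ?_⟩, ?_⟩
      · intro i hi
        by_cases h : i = 0
        · simp [h, ha0, hau]
        · have hik : i < (L s).length := by rw [hlen]; omega
          have hdne : (L s).drop i ≠ [] := by
            have : 0 < ((L s).drop i).length := by
              rw [List.length_drop]
              omega
            exact List.length_pos_iff.mp this
          have hdirr : ∀ x ∈ (L s).drop i, Irreducible x :=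
            fun x hx => hlirr x (List.mem_of_mem_drop hx)
          simp only [if_neg h]
          exact ⟨prod_irred_ne_zero hdirr, prod_irred_not_unit hdirr hdne⟩
      · intro i h1 h2
        have hik : i < (L s).length := by rw [hlen]; omega
        have hi1k : i - 1 < (L s).length := by omega
        have hdrop : (L s).drop (i-1) = (L s)[i-1] :: (L s).drop (i - 1 + 1) :=
          List.drop_eq_getElem_cons hi1k
        rw [Nat.sub_add_cancel h1] at hdrop
        by_cases h : i = 1
        · subst h
          obtain ⟨u, hu⟩ := Associates.mk_eq_mk_iff_associated.mp hmka
          refine ⟨(L s)[0] * (u : D), (irreducible_mul_isUnit u.isUnit).mpr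
            (hlirr _ (List.getElem_mem _)), ?_⟩
          have hcons : L s = (L s)[0] :: (L s).drop 1 := by simpa using hdrop
          have hgoal : a = (L s)[0] * (u : D) * ((L s).drop 1).prod := by
            rw [← hu]
            conv_lhs => rw [hcons, List.prod_cons]
            ring
          simpa using hgoal
        · have hi10 : i - 1 ≠ 0 := by omega
          refine ⟨(L s)[i-1], hlirr _ (List.getElem_mem _), ?_⟩
          simp only [if_neg hi10, if_neg (by omega : i ≠ 0)]
          rw [hdrop, List.prod_cons]
      · funext i
        by_cases h : (i : ℕ) = 0
        · simp only [h, if_pos rfl, List.drop_zero]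
          exact hmka
        · simp only [if_neg h]
    · -- injectivity on the factorization set
      rintro s ⟨hsprod, hsirr⟩ s' ⟨hsprod', hsirr'⟩ h
      have hk1 : 1 ≤ Multiset.card s := hcard1 s hsprod
      have hk1' : 1 ≤ Multiset.card s' := hcard1 s' hsprod'
      have h1 : Multiset.card s - 1 = Multiset.card s' - 1 := congrArg Sigma.fst h
      have hk : Multiset.card s = Multiset.card s' := by omega
      have h2 : ∀ i, i ≤ Multiset.card s - 1 →
          Associates.mk (((L s).drop i).prod) = Associates.mk (((L s').drop i).prod) := by
        intro i hi
        have hlt : i < Multiset.card s - 1 + 1 := by omega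
        have hlt' : i < Multiset.card s' - 1 + 1 := by omega
        have hcg := congrArg (fun c : Σ n : ℕ, Fin (n+1) → Associates D =>
          if hcond : i < c.1 + 1 then c.2 ⟨i, hcond⟩ else 1) h
        dsimp only at hcg
        rwa [dif_pos hlt, dif_pos hlt'] at hcg
      have hmapeq : (L s).map Associates.mk = (L s').map Associates.mk := by
        refine List.ext_getElem (by rw [hLmap, hLmap, Multiset.length_toList,
          Multiset.length_toList, hk]) ?_
        intro j hj1 hj2
        have hjk : j < Multiset.card s := by rwa [List.length_map, hLlen] at hj1
        simp only [List.getElem_map]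
        rcases Nat.lt_or_ge j (Multiset.card s - 1) with hcase | hcase
        · have e1 := h2 j (by omega)
          have e2 := h2 (j+1) (by omega)
          have d1 : (L s).drop j = (L s)[j]'(by rw [hLlen]; omega) :: (L s).drop (j+1) :=
            List.drop_eq_getElem_cons (by rw [hLlen]; omega)
          have d1' : (L s').drop j = (L s')[j]'(by rw [hLlen, ← hk]; omega) :: (L s').drop (j+1) :=
            List.drop_eq_getElem_cons (by rw [hLlen, ← hk]; omega)
          rw [d1, d1', List.prod_cons, List.prod_cons, ← Associates.mk_mul_mk,
            ← Associates.mk_mul_mk, e2] at e1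
          have hne : Associates.mk (((L s').drop (j+1)).prod) ≠ 0 := by
            rw [Ne, Associates.mk_eq_zero]
            exact prod_irred_ne_zero (fun x hx => hLirr s' hsirr' x (List.mem_of_mem_drop hx))
          exact mul_right_cancel₀ hne e1
        · have hjeq : j = Multiset.card s - 1 := by omega
          have e1 := h2 j (by omega)
          have d1 : (L s).drop j = [(L s)[j]'(by rw [hLlen]; omega)] := by
            rw [List.drop_eq_getElem_cons (by rw [hLlen]; omega)]
            congr 1
            rw [show j + 1 = (L s).length by rw [hLlen]; omega]
            exact List.drop_length
          have d1' : (L s').drop j = [(L s')[j]'(by rw [hLlen, ← hk]; omega)] := by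
            rw [List.drop_eq_getElem_cons (by rw [hLlen, ← hk]; omega)]
            congr 1
            rw [show j + 1 = (L s').length by rw [hLlen]; omega]
            exact List.drop_length
          rw [d1, d1', List.prod_singleton, List.prod_singleton] at e1
          exact e1
      calc s = ↑s.toList := (Multiset.coe_toList s).symm
        _ = ↑((L s).map Associates.mk) := by rw [hLmap]
        _ = ↑((L s').map Associates.mk) := by rw [hmapeq]
        _ = ↑s'.toList := by rw [hLmap]
        _ = s' := Multiset.coe_toList s'
end

section
/- Let 𝔉 be the subgroup of K× generated by the irreducible elements of D together with the units of D. Then for nonzero a, b ∈ K, there is a weak path connecting a to b (a finite sequence x₀, …, xₖ of nonzero elements of K with x₀D = aD, xₖD = bD, and each consecutive quotient xᵢ₋₁/xᵢ or xᵢ/xᵢ₋₁ an irreducible element of D) if and only if a𝔉 = b𝔉; consequently, the map aD ↦ a𝔉 induces a bijection from the set of equivalence classes of principal fractional ideals under the weak-path relation onto the quotient group K×/𝔉. -/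
/-- A weak path connecting `a` to `b` in the graph of divisibility: a finite sequence
`x 0, x 1, …, x k` of nonzero elements of `K` with `x 0 • D = a • D` and
`x k • D = b • D` as fractional ideals, such that each consecutive quotient
`x (i-1) / x i` or `x i / x (i-1)` is an irreducible element of `D`. -/
def WeakPath (D : Type*) {K : Type*} [CommRing D] [Field K] [Algebra D K]
    (a b : K) : Prop :=
  ∃ (k : ℕ) (x : ℕ → K), (∀ i ≤ k, x i ≠ 0) ∧
    Submodule.span D {x 0} = Submodule.span D {a} ∧
    Submodule.span D {x k} = Submodule.span D {b} ∧
    ∀ i, 1 ≤ i → i ≤ k →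
      (∃ π : D, Irreducible π ∧ x (i - 1) / x i = algebraMap D K π) ∨
      (∃ π : D, Irreducible π ∧ x i / x (i - 1) = algebraMap D K π)

/-- `𝔉` : the subgroup of `Kˣ` generated by the irreducible elements of `D` together
with the units of `D`. -/
def frakF (D K : Type*) [CommRing D] [Field K] [Algebra D K] : Subgroup Kˣ :=
  Subgroup.closure {u : Kˣ | ∃ p : D, (Irreducible p ∨ IsUnit p) ∧ (u : K) = algebraMap D K p}

section Aux

set_option linter.unusedSectionVars false

variable {D K : Type*} [CommRing D] [IsDomain D] [Field K] [Algebra D K] [IsFractionRing D K]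

/-- membership of a nonzero element of `K` in `𝔉`, phrased in `K`. -/
def InF (D : Type*) {K : Type*} [CommRing D] [Field K] [Algebra D K] (c : K) : Prop :=
  ∃ u : Kˣ, (u : K) = c ∧ u ∈ frakF D K

lemma algMap_ne_zero {d : D} (hd : d ≠ 0) : algebraMap D K d ≠ 0 := by
  simpa using (map_ne_zero_iff _ (IsFractionRing.injective D K)).2 hd

lemma inF_one : InF D (1 : K) := ⟨1, rfl, one_mem _⟩

lemma inF_mul {c d : K} (hc : InF D c) (hd : InF D d) : InF D (c * d) := by
  obtain ⟨u, hu, hmu⟩ := hc; obtain ⟨v, hv, hmv⟩ := hd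
  exact ⟨u * v, by push_cast; rw [hu, hv], mul_mem hmu hmv⟩

lemma inF_inv {c : K} (hc : InF D c) : InF D c⁻¹ := by
  obtain ⟨u, hu, hmu⟩ := hc
  exact ⟨u⁻¹, by rw [← hu]; simp, inv_mem hmu⟩

lemma inF_irr {π : D} (hπ : Irreducible π) : InF D (algebraMap D K π) := by
  refine ⟨Units.mk0 _ (algMap_ne_zero hπ.ne_zero), rfl, Subgroup.subset_closure ?_⟩
  exact ⟨π, Or.inl hπ, rfl⟩

lemma inF_unit {d : D} (hd : IsUnit d) : InF D (algebraMap D K d) := by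
  have hd0 : d ≠ 0 := hd.ne_zero
  refine ⟨Units.mk0 _ (algMap_ne_zero hd0), rfl, Subgroup.subset_closure ?_⟩
  exact ⟨d, Or.inr hd, rfl⟩

lemma inF_of_span {x y : K} (hx : x ≠ 0)
    (h : Submodule.span D {x} = Submodule.span D {y}) : InF D (x / y) := by
  obtain ⟨u, hu⟩ := Submodule.span_singleton_eq_span_singleton.mp h
  have hu' : algebraMap D K (u : D) * x = y := by
    rw [← hu, Units.smul_def, Algebra.smul_def]
  have hne : algebraMap D K (u : D) ≠ 0 := algMap_ne_zero u.ne_zero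
  have : x / y = (algebraMap D K (u : D))⁻¹ := by
    rw [← hu']; field_simp
  rw [this]
  exact inF_inv (inF_unit u.isUnit)

lemma wp_refl {a b : K} (h : Submodule.span D {a} = Submodule.span D {b}) (ha : a ≠ 0) :
    WeakPath D a b :=
  ⟨0, fun _ => a, fun _ _ => ha, rfl, h, fun i hi hik => by omega⟩

lemma wp_symm {a b : K} (h : WeakPath D a b) : WeakPath D b a := by
  obtain ⟨k, x, hx, h0, hk, hs⟩ := h
  refine ⟨k, fun i => x (k - i), fun i hi => hx _ (by omega), by simpa, by simpa, ?_⟩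
  intro i hi hik
  have h1 : k - (i - 1) = (k - i) + 1 := by omega
  rcases hs (k - i + 1) (by omega) (by omega) with ⟨π, hπ, hq⟩ | ⟨π, hπ, hq⟩
  · right
    refine ⟨π, hπ, ?_⟩
    show x (k - i) / x (k - (i - 1)) = _
    rw [h1]
    simpa using hq
  · left
    refine ⟨π, hπ, ?_⟩
    show x (k - (i - 1)) / x (k - i) = _
    rw [h1]
    simpa using hq

lemma wp_trans {a b c : K} (h1 : WeakPath D a b) (h2 : WeakPath D b c) : WeakPath D a c := by
  obtain ⟨k₁, x, hx, hx0, hxk, hxs⟩ := h1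
  obtain ⟨k₂, y, hy, hy0, hyk, hys⟩ := h2
  obtain ⟨u, hu⟩ := Submodule.span_singleton_eq_span_singleton.mp (hy0.trans hxk.symm)
  have hu' : algebraMap D K (u : D) * y 0 = x k₁ := by
    rw [← hu, Units.smul_def, Algebra.smul_def]
  have hune : algebraMap D K (u : D) ≠ 0 := algMap_ne_zero u.ne_zero
  refine ⟨k₁ + k₂, fun i => if i < k₁ then x i else algebraMap D K (u : D) * y (i - k₁),
    ?_, ?_, ?_, ?_⟩ <;>
    [skip; skip; skip; skip]
  case _ =>
    intro i hi
    by_cases h : i < k₁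
    · simpa [h] using hx i (by omega)
    · simp only [if_neg h]
      exact mul_ne_zero hune (hy _ (by omega))
  case _ =>
    by_cases h : 0 < k₁
    · simpa [h] using hx0
    · have hk0 : k₁ = 0 := by omega
      subst hk0
      simp only [Nat.lt_irrefl, if_neg, Nat.sub_zero]
      rw [hu']
      simpa using hx0
  case _ =>
    have hlt : ¬ k₁ + k₂ < k₁ := by omega
    simp only [if_neg hlt, Nat.add_sub_cancel_left]
    rw [show Submodule.span D {algebraMap D K (u : D) * y k₂} = Submodule.span D {y k₂} from ?_]
    · exact hyk
    · apply Submodule.span_singleton_eq_span_singleton.mpr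
      refine ⟨u⁻¹, ?_⟩
      rw [Units.smul_def, Algebra.smul_def, ← mul_assoc, ← map_mul]
      simp
  case _ =>
    have hzy : ∀ j : ℕ,
        (if k₁ + j < k₁ then x (k₁ + j) else algebraMap D K (u : D) * y (k₁ + j - k₁))
          = algebraMap D K (u : D) * y j := by
      intro j
      rw [if_neg (by omega), Nat.add_sub_cancel_left]
    intro i hi hik
    by_cases h : i ≤ k₁
    · have h1 : i - 1 < k₁ := by omega
      by_cases h2 : i < k₁
      · show (∃ π : D, Irreducible π ∧
            (if i - 1 < k₁ then x (i-1) else _) / (if i < k₁ then x i else _) = _) ∨ _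
        simp only [if_pos h1, if_pos h2]
        exact hxs i hi (by omega)
      · -- i = k₁
        have hik1 : i = k₁ := by omega
        subst hik1
        show (∃ π : D, Irreducible π ∧
            (if i - 1 < i then x (i-1) else _) / (if i < i then x i else _) = _) ∨ _
        simp only [if_pos h1, if_neg (lt_irrefl i), Nat.sub_self]
        rw [hu']
        exact hxs i hi le_rfl
    · obtain ⟨j, hj1, rfl⟩ : ∃ j : ℕ, 1 ≤ j ∧ i = k₁ + j := ⟨i - k₁, by omega, by omega⟩
      have e1 : k₁ + j - 1 = k₁ + (j - 1) := by omega
      show (∃ π : D, Irreducible π ∧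
          (if k₁ + j - 1 < k₁ then x (k₁+j-1) else algebraMap D K (u : D) * y (k₁+j-1-k₁)) /
          (if k₁ + j < k₁ then x (k₁+j) else algebraMap D K (u : D) * y (k₁+j-k₁))
            = algebraMap D K π) ∨
        (∃ π : D, Irreducible π ∧
          (if k₁ + j < k₁ then x (k₁+j) else algebraMap D K (u : D) * y (k₁+j-k₁)) /
          (if k₁ + j - 1 < k₁ then x (k₁+j-1) else algebraMap D K (u : D) * y (k₁+j-1-k₁))
            = algebraMap D K π)
      rw [e1, hzy (j - 1), hzy j]
      have hyj : y j ≠ 0 := hy _ (by omega)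
      have hyj' : y (j - 1) ≠ 0 := hy _ (by omega)
      have q1 : algebraMap D K (u : D) * y (j - 1) / (algebraMap D K (u : D) * y j)
          = y (j - 1) / y j := by field_simp
      have q2 : algebraMap D K (u : D) * y j / (algebraMap D K (u : D) * y (j - 1))
          = y j / y (j - 1) := by field_simp
      rw [q1, q2]
      exact hys j (by omega) (by omega)

lemma wp_forward {a b : K} (ha : a ≠ 0) (hb : b ≠ 0) (h : WeakPath D a b) :
    InF D (a / b) := by
  obtain ⟨k, x, hx, h0, hk, hs⟩ := h
  have key : ∀ n ≤ k, InF D (x 0 / x n) := by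
    intro n
    induction n with
    | zero => intro _; rw [div_self (hx 0 (by omega))]; exact inF_one
    | succ m ih =>
      intro hm
      have hxm : x m ≠ 0 := hx m (by omega)
      have hxm1 : x (m + 1) ≠ 0 := hx (m + 1) hm
      have : x 0 / x (m + 1) = (x 0 / x m) * (x m / x (m + 1)) := by
        field_simp
      rw [this]
      refine inF_mul (ih (by omega)) ?_
      rcases hs (m + 1) (by omega) hm with ⟨π, hπ, hq⟩ | ⟨π, hπ, hq⟩
      · simp only [Nat.add_sub_cancel] at hq
        rw [hq]; exact inF_irr hπ
      · simp only [Nat.add_sub_cancel] at hq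
        have : x m / x (m + 1) = (x (m + 1) / x m)⁻¹ := by
          field_simp
        rw [this, hq]
        exact inF_inv (inF_irr hπ)
  have h1 : InF D (a / x 0) := inF_of_span ha h0.symm
  have h2 : InF D (x k / b) := inF_of_span (hx k le_rfl) hk
  have hx0 : x 0 ≠ 0 := hx 0 (by omega)
  have hxk : x k ≠ 0 := hx k le_rfl
  have : a / b = (a / x 0) * (x 0 / x k) * (x k / b) := by
    field_simp
  rw [this]
  exact inF_mul (inF_mul h1 (key k le_rfl)) h2

lemma wp_backward_gen {u : Kˣ} (hu : u ∈ frakF D K) :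
    ∀ c : K, c ≠ 0 → WeakPath D c (c * u) := by
  induction hu using Subgroup.closure_induction with
  | mem v hv =>
    obtain ⟨p, hp | hp, hvp⟩ := hv
    · intro c hc
      refine ⟨1, fun i => if i = 0 then c else c * v, ?_, by simp, by simp, ?_⟩
      · intro i hi
        rcases Nat.eq_zero_or_pos i with rfl | h
        · simpa
        · have : i = 1 := by omega
          subst this
          simpa using mul_ne_zero hc v.ne_zero
      · intro i hi hik
        have : i = 1 := by omega
        subst this
        right
        refine ⟨p, hp, ?_⟩
        simp [hvp.symm, mul_div_assoc, mul_div_cancel_left₀ _ hc]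
    · intro c hc
      refine wp_refl ?_ hc
      apply Submodule.span_singleton_eq_span_singleton.mpr
      obtain ⟨d, rfl⟩ := hp
      refine ⟨d, ?_⟩
      rw [Units.smul_def, Algebra.smul_def, hvp]
      ring
  | one => intro c hc; simpa using wp_refl rfl hc
  | mul v w hv hw ihv ihw =>
    intro c hc
    have h1 := ihv c hc
    have h2 := ihw (c * v) (mul_ne_zero hc v.ne_zero)
    have : (c * ↑v) * ↑w = c * ↑(v * w) := by push_cast; ring
    rw [this] at h2
    exact wp_trans h1 h2
  | inv v hv ihv =>
    intro c hc
    have h1 := ihv (c * ↑v⁻¹) (mul_ne_zero hc (v⁻¹).ne_zero)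
    have : (c * ↑v⁻¹) * ↑v = c := by
      rw [mul_assoc, ← Units.val_mul, inv_mul_cancel]; simp
    rw [this] at h1
    exact wp_symm h1

lemma wp_iff (a b : Kˣ) : WeakPath D (a : K) (b : K) ↔
    (QuotientGroup.mk a : Kˣ ⧸ frakF D K) = QuotientGroup.mk b := by
  constructor
  · intro h
    obtain ⟨u, hu, hmu⟩ := wp_forward a.ne_zero b.ne_zero h
    rw [QuotientGroup.eq]
    have h1 : u = a * b⁻¹ := by
      ext; rw [hu]; push_cast; rw [div_eq_mul_inv]
    have h2 : a⁻¹ * b = u⁻¹ := by rw [h1, mul_inv, inv_inv]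
    rw [h2]
    exact inv_mem hmu
  · intro h
    rw [QuotientGroup.eq] at h
    have := wp_backward_gen h (a : K) a.ne_zero
    have e : (a : K) * ↑(a⁻¹ * b) = b := by push_cast; field_simp
    rwa [e] at this

end Aux

/-- Two nonzero elements of `K` are connected by a weak path iff they have the same
coset modulo `𝔉`; consequently `aD ↦ a𝔉` induces a bijection from the weak-path classes
of principal fractional ideals onto `Kˣ ⧸ 𝔉`. -/
theorem components_biject_with_quotient_by_frakF
    (D K : Type*) [CommRing D] [IsDomain D] [Field K] [Algebra D K] [IsFractionRing D K] :
    (∀ a b : Kˣ, WeakPath D (a : K) (b : K) ↔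
      (QuotientGroup.mk a : Kˣ ⧸ frakF D K) = QuotientGroup.mk b) ∧
    ∃ e : Quot (fun a b : Kˣ => WeakPath D (a : K) (b : K)) ≃ (Kˣ ⧸ frakF D K),
      ∀ a : Kˣ, e (Quot.mk _ a) = QuotientGroup.mk a := by
  refine ⟨fun a b => wp_iff a b, ?_⟩
  refine ⟨⟨Quot.lift (fun a => (QuotientGroup.mk a : Kˣ ⧸ frakF D K))
      (fun a b hab => (wp_iff a b).1 hab),
    fun q => Quotient.liftOn' q (fun a => Quot.mk _ a) (fun a b hab => ?_), ?_, ?_⟩, fun a => rfl⟩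
  · exact Quot.sound ((wp_iff a b).2 (QuotientGroup.eq.2 (QuotientGroup.leftRel_apply.1 hab)))
  · exact fun q => Quot.inductionOn q (fun a => rfl)
  · exact fun q => Quotient.inductionOn' q (fun a => rfl)
end
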